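/- Let n ≥ 2, V = [v¹ ... vⁿ] be an orthogonal matrix, Λ = diag(λ₁,...,λₙ) with λ₁ < λ₂ ≤ ... ≤ λₙ, and A = VΛV^⊤. If v¹ ∈ ℝ^n_+, then for any c with λ₁ < c ≤ λ₂, the set {x ∈ ℝ^n_{++} : Σᵢ (λᵢ - c)⟨vⁱ, x⟩² ≤ 0} is convex. -/

import Mathlib

open RealInnerProductSpace

private lemma stmt15_aux (Sx Sy Sxy Px Py K a b : ℝ) (ha : 0 ≤ a) (hb : 0 ≤ b)
    (h1 : Sx ≤ K * Px ^ 2) (h2 : Sy ≤ K * Py ^ 2) (h3 : Sxy ≤ K * Px * Py) :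
    a ^ 2 * Sx + 2 * a * b * Sxy + b ^ 2 * Sy ≤ K * (a * Px + b * Py) ^ 2 := by
  nlinarith [mul_nonneg (sq_nonneg a) (sub_nonneg.2 h1),
    mul_nonneg (sq_nonneg b) (sub_nonneg.2 h2),
    mul_nonneg (mul_nonneg ha hb) (sub_nonneg.2 h3)]

private lemma stmt15_aux2 (Sxy M : ℝ) (h1 : Sxy ^ 2 ≤ M ^ 2) (h2 : 0 < M) : Sxy ≤ M := by
  nlinarith [sq_nonneg (Sxy - M), sq_nonneg (Sxy + M)]

theorem stmt15 (n : ℕ) (hn : 2 ≤ n)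
    (v : Fin n → EuclideanSpace ℝ (Fin n)) (lam : Fin n → ℝ)
    (horth : ∀ i j, ⟪v i, v j⟫ = if i = j then 1 else 0)
    (hmono : Monotone lam)
    (hlt : lam ⟨0, by omega⟩ < lam ⟨1, by omega⟩)
    (hv1 : ∀ i, 0 ≤ v ⟨0, by omega⟩ i)
    (c : ℝ) (hc1 : lam ⟨0, by omega⟩ < c) (hc2 : c ≤ lam ⟨1, by omega⟩) :
    Convex ℝ {x : EuclideanSpace ℝ (Fin n) |
      (∀ i, 0 < x i) ∧ (∑ i, (lam i - c) * ⟪v i, x⟫ ^ 2) ≤ 0} := by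
  classical
  set i0 : Fin n := ⟨0, by omega⟩ with hi0
  set i1 : Fin n := ⟨1, by omega⟩ with hi1
  have hK : 0 < c - lam i0 := by linarith
  have hθ : ∀ i : Fin n, i ≠ i0 → 0 ≤ lam i - c := by
    intro i hi
    have h1 : 1 ≤ i.val := by
      rcases Nat.eq_zero_or_pos i.val with h | h
      · exact absurd (Fin.ext h) hi
      · exact h
    have : lam i1 ≤ lam i := hmono h1
    linarith
  have hvne : v i0 ≠ 0 := by
    intro h
    have := horth i0 i0
    simp [h] at this
  have hPpos : ∀ x : EuclideanSpace ℝ (Fin n), (∀ i, 0 < x i) → 0 < ⟪v i0, x⟫ := by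
    intro x hx
    have hinner : ⟪v i0, x⟫ = ∑ j, v i0 j * x j := by
      simp [PiLp.inner_apply]
      exact Finset.sum_congr rfl fun j _ => mul_comm _ _
    rw [hinner]
    obtain ⟨j, hj⟩ : ∃ j, v i0 j ≠ 0 := by
      by_contra h
      push_neg at h
      exact hvne (PiLp.ext fun j => by simp [h j])
    refine Finset.sum_pos' (fun i _ => mul_nonneg (hv1 i) (hx i).le)
      ⟨j, Finset.mem_univ j, mul_pos ((hv1 j).lt_of_ne (Ne.symm hj)) (hx j)⟩
  set S : Finset (Fin n) := ({i0}ᶜ : Finset (Fin n)) with hS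
  have hmem : ∀ x : EuclideanSpace ℝ (Fin n),
      (∑ i, (lam i - c) * ⟪v i, x⟫ ^ 2) ≤ 0 ↔
      ∑ i ∈ S, (lam i - c) * ⟪v i, x⟫ ^ 2 ≤ (c - lam i0) * ⟪v i0, x⟫ ^ 2 := by
    intro x
    rw [Fintype.sum_eq_add_sum_compl i0]
    constructor <;> intro h <;> linarith
  rintro x ⟨hx, hqx⟩ y ⟨hy, hqy⟩ a b ha hb hab
  refine ⟨?_, ?_⟩
  · intro i
    have hzi : (a • x + b • y) i = a * x i + b * y i := rfl
    rw [hzi]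
    rcases eq_or_lt_of_le ha with h | h
    · have hb1 : b = 1 := by linarith
      simp [← h, hb1, hy i]
    · have h1 : 0 < a * x i := mul_pos h (hx i)
      have h2 : 0 ≤ b * y i := mul_nonneg hb (hy i).le
      linarith
  · refine (hmem (a • x + b • y)).2 ?_
    have hz : ∀ i, ⟪v i, a • x + b • y⟫ = a * ⟪v i, x⟫ + b * ⟪v i, y⟫ := by
      intro i
      rw [inner_add_right, real_inner_smul_right, real_inner_smul_right]
    set s : Fin n → ℝ := fun i => Real.sqrt (lam i - c) * ⟪v i, x⟫ with hs
    set t : Fin n → ℝ := fun i => Real.sqrt (lam i - c) * ⟪v i, y⟫ with ht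
    have hsq : ∀ i ∈ S, (Real.sqrt (lam i - c)) ^ 2 = lam i - c := by
      intro i hi
      exact Real.sq_sqrt (hθ i (by simpa [hS] using hi))
    have hTx : ∑ i ∈ S, (s i) ^ 2 = ∑ i ∈ S, (lam i - c) * ⟪v i, x⟫ ^ 2 := by
      refine Finset.sum_congr rfl fun i hi => ?_
      rw [hs]; rw [mul_pow, hsq i hi]
    have hTy : ∑ i ∈ S, (t i) ^ 2 = ∑ i ∈ S, (lam i - c) * ⟪v i, y⟫ ^ 2 := by
      refine Finset.sum_congr rfl fun i hi => ?_
      rw [ht]; rw [mul_pow, hsq i hi]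
    have hTz : ∑ i ∈ S, (lam i - c) * ⟪v i, a • x + b • y⟫ ^ 2
        = ∑ i ∈ S, (a * s i + b * t i) ^ 2 := by
      refine Finset.sum_congr rfl fun i hi => ?_
      rw [hz i]
      have h1 : s i = Real.sqrt (lam i - c) * ⟪v i, x⟫ := rfl
      have h2 : t i = Real.sqrt (lam i - c) * ⟪v i, y⟫ := rfl
      rw [h1, h2]
      nlinarith [hsq i hi]
    rw [hTz]
    have hexp : ∑ i ∈ S, (a * s i + b * t i) ^ 2
        = a ^ 2 * ∑ i ∈ S, (s i) ^ 2 + 2 * a * b * (∑ i ∈ S, s i * t i)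
          + b ^ 2 * ∑ i ∈ S, (t i) ^ 2 := by
      rw [Finset.mul_sum, Finset.mul_sum, Finset.mul_sum, ← Finset.sum_add_distrib,
        ← Finset.sum_add_distrib]
      exact Finset.sum_congr rfl fun i _ => by ring
    set Px := ⟪v i0, x⟫ with hPx
    set Py := ⟪v i0, y⟫ with hPy
    have hPxpos : 0 < Px := hPpos x hx
    have hPypos : 0 < Py := hPpos y hy
    set K := c - lam i0 with hKdef
    have hSx : ∑ i ∈ S, (s i) ^ 2 ≤ K * Px ^ 2 := by
      rw [hTx]; exact (hmem x).1 hqx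
    have hSy : ∑ i ∈ S, (t i) ^ 2 ≤ K * Py ^ 2 := by
      rw [hTy]; exact (hmem y).1 hqy
    have hcs : (∑ i ∈ S, s i * t i) ^ 2 ≤ (∑ i ∈ S, (s i) ^ 2) * ∑ i ∈ S, (t i) ^ 2 :=
      Finset.sum_mul_sq_le_sq_mul_sq S s t
    have hSxnn : 0 ≤ ∑ i ∈ S, (s i) ^ 2 := Finset.sum_nonneg fun i _ => sq_nonneg _
    have hSynn : 0 ≤ ∑ i ∈ S, (t i) ^ 2 := Finset.sum_nonneg fun i _ => sq_nonneg _
    set Sx := ∑ i ∈ S, (s i) ^ 2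
    set Sy := ∑ i ∈ S, (t i) ^ 2
    set Sxy := ∑ i ∈ S, s i * t i with hSxy
    have hM : Sxy ≤ K * Px * Py := by
      have h1 : Sxy ^ 2 ≤ (K * Px * Py) ^ 2 := by
        calc Sxy ^ 2 ≤ Sx * Sy := hcs
        _ ≤ (K * Px ^ 2) * (K * Py ^ 2) := by
            apply mul_le_mul hSx hSy hSynn
            positivity
        _ = (K * Px * Py) ^ 2 := by ring
      have h2 : 0 < K * Px * Py := by positivity
      exact stmt15_aux2 _ _ h1 h2
    rw [hexp, hz i0]
    exact stmt15_aux Sx Sy Sxy Px Py K a b ha hb hSx hSy hM
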